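/- arXiv:1507.08389 — 4 statements merged into one kernel-verified Lean document; each statement's English description precedes it below -/
import Mathlib

section
/- Let R be a commutative Noetherian ring, I an ideal of R, and let L →α M →β N be a complex of finitely generated R-modules (β ∘ α = 0). Suppose L' ⊆ L, M' ⊆ M, N' ⊆ N are submodules with α(L') ⊆ M' and β(M') ⊆ N'. Let c ∈ ℕ and let L₁, L₂ be submodules of L with I^c L' ⊆ L₂. For each n ≥ c, let H(n) denote the homology ker(β_n)/im(α_n) of the induced complex (L₁ + I^{n-c}L₂)/I^n L' →α_n M/I^n M' →β_n N/I^n N'. Then the sequence of sets Ass_R H(n) stabilizes, i.e., there exists N₀ such that Ass_R H(n) = Ass_R H(N₀) for all n ≥ N₀. -/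
universe u

open Submodule LinearMap

set_option maxHeartbeats 1000000
set_option synthInstance.maxHeartbeats 1000000

section Sec1
variable {R : Type u} [CommRing R] {M : Type u} [AddCommGroup M] [Module R M]

/-- `T/B` as `↥(T.map B.mkQ)` vs `↥T ⧸ comap T.subtype B`. -/
noncomputable def sqEquiv (T B : Submodule R M) :
    (↥T ⧸ comap T.subtype B) ≃ₗ[R] ↥(T.map B.mkQ) := by
  have hker : ker (B.mkQ.comp T.subtype) = comap T.subtype B := by
    rw [LinearMap.ker_comp, Submodule.ker_mkQ]
  have hrange : range (B.mkQ.comp T.subtype) = T.map B.mkQ := by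
    rw [LinearMap.range_comp, Submodule.range_subtype]
  exact (Submodule.quotEquivOfEq _ _ hker.symm).trans
    ((B.mkQ.comp T.subtype).quotKerEquivRange.trans (LinearEquiv.ofEq _ _ hrange))

noncomputable def mapQId (C B : Submodule R M) (h : C ≤ B) : (M ⧸ C) →ₗ[R] M ⧸ B :=
  Submodule.mapQ C B LinearMap.id (fun x hx => h hx)

lemma mapQId_mk (C B : Submodule R M) (h : C ≤ B) (x : M) :
    mapQId C B h (C.mkQ x) = B.mkQ x := by
  simp [mapQId, Submodule.mapQ_apply, Submodule.mkQ_apply]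

lemma ker_mapQId (C B : Submodule R M) (h : C ≤ B) :
    ker (mapQId C B h) = B.map C.mkQ := by
  ext y
  obtain ⟨x, rfl⟩ := C.mkQ_surjective y
  simp only [LinearMap.mem_ker, mapQId_mk, Submodule.mkQ_apply]
  constructor
  · intro hx
    exact ⟨x, (Submodule.Quotient.mk_eq_zero B).mp hx, rfl⟩
  · rintro ⟨b, hb, hbx⟩
    have hxb : x - b ∈ C := by
      have := (Submodule.Quotient.eq C).mp (by simpa [Submodule.mkQ_apply] using hbx.symm)
      simpa using this
    have hxB : x ∈ B := by
      have := add_mem (h hxb) hb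
      simpa [sub_add_cancel] using this
    exact (Submodule.Quotient.mk_eq_zero B).mpr hxB

/-- Third isomorphism for subquotients: `(T/C)/(B/C) ≃ T/B`. -/
noncomputable def sqThird (C B T : Submodule R M) (hCB : C ≤ B) :
    (↥(T.map C.mkQ) ⧸ comap (T.map C.mkQ).subtype (B.map C.mkQ)) ≃ₗ[R] ↥(T.map B.mkQ) := by
  set g : ↥(T.map C.mkQ) →ₗ[R] M ⧸ B := (mapQId C B hCB).comp (T.map C.mkQ).subtype with hg
  have hker : ker g = comap (T.map C.mkQ).subtype (B.map C.mkQ) := by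
    rw [hg, LinearMap.ker_comp, ker_mapQId]
  have hrange : range g = T.map B.mkQ := by
    have hcomp : (mapQId C B hCB).comp C.mkQ = B.mkQ := by
      ext x; simpa [Submodule.mkQ_apply] using mapQId_mk C B hCB x
    rw [hg, LinearMap.range_comp, Submodule.range_subtype, ← Submodule.map_comp, hcomp]
  exact (Submodule.quotEquivOfEq _ _ hker.symm).trans
    (g.quotKerEquivRange.trans (LinearEquiv.ofEq _ _ hrange))

/-- Associated primes of a module are contained in those of a submodule and the quotient. -/
theorem associatedPrimes_subset_union (N : Submodule R M) :
    associatedPrimes R M ⊆ associatedPrimes R ↥N ∪ associatedPrimes R (M ⧸ N) := by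
  exact associatedPrimes.subset_union_of_exact N.injective_subtype (LinearMap.exact_subtype_mkQ N)

/-- `Ass(T/C) ⊆ Ass(B/C) ∪ Ass(T/B)` for `C ≤ B ≤ T`. -/
theorem ass_map_subset_union (C B T : Submodule R M) (hCB : C ≤ B) (hBT : B ≤ T) :
    associatedPrimes R ↥(T.map C.mkQ) ⊆
      associatedPrimes R ↥(B.map C.mkQ) ∪ associatedPrimes R ↥(T.map B.mkQ) := by
  intro p hp
  rcases associatedPrimes_subset_union (comap (T.map C.mkQ).subtype (B.map C.mkQ)) hp with h | h
  · left
    rwa [LinearEquiv.AssociatedPrimes.eq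
      (Submodule.comapSubtypeEquivOfLe (Submodule.map_mono hBT))] at h
  · right
    rwa [LinearEquiv.AssociatedPrimes.eq (sqThird C B T hCB)] at h

theorem ass_map_mono (B : Submodule R M) {X Y : Submodule R M} (hXY : X ≤ Y) :
    associatedPrimes R ↥(X.map B.mkQ) ⊆ associatedPrimes R ↥(Y.map B.mkQ) :=
  associatedPrimes.subset_of_injective (Submodule.inclusion_injective (Submodule.map_mono hXY))

/-- `(X ⊔ B)` and `X` have the same image mod `B`. -/
theorem map_sup_mkQ (B X : Submodule R M) :
    (B ⊔ X).map B.mkQ = X.map B.mkQ := by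
  rw [Submodule.map_sup]
  have hb : B.map B.mkQ = ⊥ := by
    rw [eq_bot_iff]
    rintro y ⟨x, hx, rfl⟩
    simpa [Submodule.mkQ_apply, Submodule.Quotient.mk_eq_zero] using hx
  rw [hb, bot_sup_eq]

theorem assq_eq_assmap (T B : Submodule R M) :
    associatedPrimes R (↥T ⧸ comap T.subtype B) = associatedPrimes R ↥(T.map B.mkQ) :=
  LinearEquiv.AssociatedPrimes.eq (sqEquiv T B)

end Sec1

section Sec2
variable {R : Type u} [CommRing R] {M : Type u} [AddCommGroup M] [Module R M]

lemma pow_smul_le_of_smul_le {I : Ideal R} {D : ℕ → Submodule R M}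
    (hDs : ∀ n, I • D n ≤ D (n + 1)) (j : ℕ) : ∀ n, I ^ j • D n ≤ D (n + j) := by
  induction j with
  | zero => intro n; simpa using le_rfl
  | succ j ih =>
    intro n
    have h1 : I ^ (j + 1) • D n = I ^ j • (I • D n) := by
      rw [pow_succ, mul_smul]
    rw [h1, show n + (j + 1) = (n + 1) + j by omega]
    exact le_trans (smul_mono_right _ (hDs n)) (ih (n + 1))

open PolynomialModule in
/-- The graded Rees-module attached to a sequence of submodules closed under `I`-multiplication. -/
def gadget (I : Ideal R) (D : ℕ → Submodule R M) (hDs : ∀ n, I • D n ≤ D (n + 1)) :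
    Submodule (reesAlgebra I) (PolynomialModule R M) where
  carrier := { f | ∀ i, f.coeff i ∈ D i }
  add_mem' hf hg i := Submodule.add_mem _ (hf i) (hg i)
  zero_mem' _ := Submodule.zero_mem _
  smul_mem' r f hf i := by
    rw [Subalgebra.smul_def, PolynomialModule.smul_apply]
    apply Submodule.sum_mem
    rintro ⟨j, k⟩ e
    replace e : j + k = i := Finset.HasAntidiagonal.mem_antidiagonal.mp e
    subst e
    exact (le_trans (pow_smul_le_of_smul_le hDs j k) (le_of_eq (by rw [Nat.add_comm])))
        (Submodule.smul_mem_smul (r.2 j) (hf k))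

lemma mem_gadget (I : Ideal R) (D : ℕ → Submodule R M) (hDs : ∀ n, I • D n ≤ D (n + 1))
    (f : PolynomialModule R M) : f ∈ gadget I D hDs ↔ ∀ i, f.coeff i ∈ D i := Iff.rfl

variable [IsNoetherianRing R] [Module.Finite R M]

/-- Dévissage: one finite set of ideals bounds associated primes of all graded pieces. -/
theorem lemmaS (I : Ideal R) (P : I.Filtration M) (hP : P.Stable)
    (D : ℕ → Submodule R M) (hD : ∀ n, D n ≤ P.N n) (hDs : ∀ n, I • D n ≤ D (n + 1)) :
    ∃ 𝔉 : Finset (Ideal R), ∀ n,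
      associatedPrimes R ↥((P.N n).map (D n).mkQ) ⊆ ↑𝔉 := by
  classical
  have hfg : P.submodule.FG :=
    (P.submodule_fg_iff_stable (fun i => IsNoetherian.noetherian _)).mpr hP
  haveI : IsNoetherian (reesAlgebra I) ↥P.submodule := isNoetherian_of_fg_of_noetherian _ hfg
  suffices H : ∀ (W : Submodule (reesAlgebra I) ↥P.submodule)
      (D : ℕ → Submodule R M), (∀ n, D n ≤ P.N n) → ∀ (hDs : ∀ n, I • D n ≤ D (n + 1)),
      comap P.submodule.subtype (gadget I D hDs) = W →
      ∃ 𝔉 : Finset (Ideal R), ∀ n,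
        associatedPrimes R ↥((P.N n).map (D n).mkQ) ⊆ ↑𝔉 by
    exact H _ D hD hDs rfl
  intro W
  induction W using IsNoetherian.induction with
  | _ W IH =>
  intro D hD hDs hW
  by_cases hall : ∀ n, P.N n ≤ D n
  · refine ⟨∅, fun n => ?_⟩
    have hbot : (P.N n).map (D n).mkQ = ⊥ := by
      rw [eq_bot_iff]
      rintro y ⟨z, hz, rfl⟩
      simpa [Submodule.mkQ_apply, Submodule.Quotient.mk_eq_zero] using hall n hz
    rw [hbot, associatedPrimes.eq_empty_of_subsingleton]
    simp
  · push_neg at hall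
    obtain ⟨d₀, hd₀⟩ := hall
    set 𝒮 : Set (Ideal R) :=
      { J | ∃ d x, x ∈ P.N d ∧ x ∉ D d ∧ J = (R ∙ ((D d).mkQ x)).annihilator } with h𝒮
    have h𝒮ne : 𝒮.Nonempty := by
      obtain ⟨x, hx1, hx2⟩ := SetLike.not_le_iff_exists.mp hd₀
      exact ⟨_, d₀, x, hx1, hx2, rfl⟩
    obtain ⟨J, hJ𝒮, hJmax⟩ :=
      (set_has_maximal_iff_noetherian.mpr (inferInstance : IsNoetherian R R)) 𝒮 h𝒮ne
    obtain ⟨d, x, hxP, hxD, hJ⟩ := hJ𝒮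
    have hannmem : ∀ (k : ℕ) (y : M) (r : R),
        r ∈ (R ∙ ((D k).mkQ y)).annihilator ↔ r • y ∈ D k := by
      intro k y r
      rw [Submodule.mem_annihilator_span_singleton, ← map_smul, Submodule.mkQ_apply,
        Submodule.Quotient.mk_eq_zero]
    have hmaxkey : ∀ (k : ℕ) (y : M), y ∈ P.N k → y ∉ D k →
        J ≤ (R ∙ ((D k).mkQ y)).annihilator → (R ∙ ((D k).mkQ y)).annihilator = J := by
      intro k y hyP hyD hle
      by_contra hne
      exact hJmax _ ⟨k, y, hyP, hyD, rfl⟩ (lt_of_le_of_ne hle (Ne.symm hne))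
    set D' : ℕ → Submodule R M :=
      fun k => D k ⊔ (if d ≤ k then I ^ (k - d) • (R ∙ x) else ⊥) with hD'
    have hD'le : ∀ n, D' n ≤ P.N n := by
      intro n
      apply sup_le (hD n)
      split_ifs with h
      · refine le_trans (smul_mono_right _ ((Submodule.span_singleton_le_iff_mem _ _).mpr hxP))
          (le_trans (P.pow_smul_le (n - d) d) (le_of_eq (by rw [Nat.sub_add_cancel h])))
      · exact bot_le
    have hD's : ∀ n, I • D' n ≤ D' (n + 1) := by
      intro n
      rw [hD']
      simp only []
      rw [Submodule.smul_sup]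
      apply sup_le (le_trans (hDs n) le_sup_left)
      have hkey : I • (if d ≤ n then I ^ (n - d) • (R ∙ x) else ⊥) ≤
          (if d ≤ n + 1 then I ^ (n + 1 - d) • (R ∙ x) else ⊥) := by
        split_ifs with h h1 h1
        · rw [← mul_smul, ← pow_succ', show n + 1 - d = (n - d) + 1 by omega, pow_succ']
        · omega
        · rw [Submodule.smul_bot]; exact bot_le
        · rw [Submodule.smul_bot]
      exact le_trans hkey le_sup_right
    have hDD' : ∀ n, D n ≤ D' n := fun n => le_sup_left
    have hxD' : x ∈ D' d := by
      apply Submodule.mem_sup_right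
      rw [if_pos (le_refl d), Nat.sub_self, pow_zero, Ideal.one_eq_top, Submodule.top_smul]
      exact Submodule.mem_span_singleton_self x
    have hsingle : PolynomialModule.single R d x ∈ P.submodule := by
      intro i
      rw [PolynomialModule.coeff_single, Finsupp.single_apply]
      split_ifs with h
      · exact h ▸ hxP
      · exact Submodule.zero_mem _
    have hlt : W < comap P.submodule.subtype (gadget I D' hD's) := by
      rw [← hW]
      refine lt_of_le_of_ne (Submodule.comap_mono (fun f hf => (mem_gadget I D' hD's f).mpr (fun i => hDD' i ((mem_gadget I D hDs f).mp hf i)))) ?_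
      intro heq
      have hmem : (⟨PolynomialModule.single R d x, hsingle⟩ : ↥P.submodule) ∈
          comap P.submodule.subtype (gadget I D' hD's) := by
        rw [Submodule.mem_comap, mem_gadget]
        intro i
        show (PolynomialModule.single R d x).coeff i ∈ D' i
        rw [PolynomialModule.coeff_single, Finsupp.single_apply]
        split_ifs with h
        · exact h ▸ hxD'
        · exact Submodule.zero_mem _
      rw [← heq] at hmem
      have hx' : (PolynomialModule.single R d x).coeff d ∈ D d := (mem_gadget I D hDs _).mp hmem d
      rw [PolynomialModule.coeff_single, Finsupp.single_apply, if_pos rfl] at hx'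
      exact hxD hx'
    obtain ⟨𝔉', h𝔉'⟩ := IH _ hlt D' hD'le hD's rfl
    refine ⟨insert J 𝔉', fun n => ?_⟩
    intro p hp
    rcases ass_map_subset_union (D n) (D' n) (P.N n) (hDD' n) (hD'le n) hp with h | h
    · obtain ⟨hprime, ξ, hξ⟩ := (isAssociatedPrime_iff).mp h
      obtain ⟨w, hw, hwval⟩ := ξ.2
      have hξne : (ξ : M ⧸ D n) ≠ 0 := by
        intro h0
        apply hprime.ne_top
        rw [hξ, eq_top_iff]
        intro r _
        rw [Submodule.mem_colon_singleton, Submodule.mem_bot]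
        apply Subtype.ext
        show r • (ξ : M ⧸ D n) = 0
        rw [h0, smul_zero]
      have hwD : w ∉ D n := by
        intro hwn
        apply hξne
        rw [← hwval, Submodule.mkQ_apply]
        exact (Submodule.Quotient.mk_eq_zero _).mpr hwn
      have hmemann : ∀ r : R, r ∈ p ↔ r • w ∈ D n := by
        intro r
        rw [hξ, Submodule.mem_colon_singleton, Submodule.mem_bot]
        constructor
        · intro hr
          have h1 : r • (ξ : M ⧸ D n) = 0 := congrArg Subtype.val hr
          rw [← hwval, Submodule.mkQ_apply, ← Submodule.Quotient.mk_smul] at h1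
          exact (Submodule.Quotient.mk_eq_zero _).mp h1
        · intro hr
          apply Subtype.ext
          show r • (ξ : M ⧸ D n) = 0
          rw [← hwval, Submodule.mkQ_apply, ← Submodule.Quotient.mk_smul]
          exact (Submodule.Quotient.mk_eq_zero _).mpr hr
      rcases Submodule.mem_sup.mp hw with ⟨u, hu, v, hv, rfl⟩
      by_cases hdn : d ≤ n
      · rw [if_pos hdn] at hv
        obtain ⟨a, haI, rfl⟩ := Submodule.mem_smul_span_singleton.mp hv
        have haxP : a • x ∈ P.N n :=
          (le_trans (P.pow_smul_le (n - d) d) (le_of_eq (by rw [Nat.sub_add_cancel hdn])))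
            (Submodule.smul_mem_smul haI hxP)
        have haxD : a • x ∉ D n := fun hax => hwD (Submodule.add_mem _ hu hax)
        have hann_eq : ∀ r : R, r ∈ p ↔ r • (a • x) ∈ D n := by
          intro r
          rw [hmemann r, smul_add]
          constructor
          · intro h'
            have h2 : r • u ∈ D n := Submodule.smul_mem _ r hu
            simpa using Submodule.sub_mem _ h' h2
          · intro h'
            exact Submodule.add_mem _ (Submodule.smul_mem _ r hu) h'
        have hJle : J ≤ (R ∙ ((D n).mkQ (a • x))).annihilator := by
          intro r hr
          rw [hannmem]
          have hrx : r • x ∈ D d := (hannmem d x r).mp (hJ ▸ hr)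
          have h3 : a • (r • x) ∈ I ^ (n - d) • D d := Submodule.smul_mem_smul haI hrx
          have h4 : a • (r • x) ∈ D n :=
            (le_trans (pow_smul_le_of_smul_le hDs (n - d) d)
              (le_of_eq (by rw [Nat.add_comm, Nat.sub_add_cancel hdn]))) h3
          rwa [smul_comm] at h4
        have hfin : (R ∙ ((D n).mkQ (a • x))).annihilator = J := hmaxkey n (a • x) haxP haxD hJle
        have hpJ : p = J := by
          rw [← hfin]
          ext r
          rw [hann_eq r, hannmem]
        simp [hpJ]
      · rw [if_neg hdn] at hv
        have hv0 : v = 0 := hv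
        subst hv0
        exact absurd (by simpa using hu) hwD
    · simp only [Finset.coe_insert, Set.mem_insert_iff]
      right
      exact h𝔉' n h


section Sec3
variable {R : Type u} [CommRing R] {M : Type u} [AddCommGroup M] [Module R M]

/-- An eventually-decreasing sequence of subsets of a finite set stabilizes. -/
lemma stabilize_of_antitone {X : Type*} (S : ℕ → Set X) (𝔉 : Finset X) (N : ℕ)
    (hdec : ∀ n, N ≤ n → S (n + 1) ⊆ S n) (hfin : S N ⊆ ↑𝔉) :
    ∃ N₀, N ≤ N₀ ∧ ∀ n, N₀ ≤ n → S n = S N₀ := by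
  classical
  have hchain : ∀ j k, j ≤ k → N ≤ j → S k ⊆ S j := by
    intro j k hjk hNj
    induction k, hjk using Nat.le_induction with
    | base => exact le_rfl
    | succ k hk ih => exact (hdec k (le_trans hNj hk)).trans ih
  set f : ℕ → ℕ := fun k => (𝔉.filter (fun x => x ∈ S (N + k))).card with hf
  obtain ⟨k₀, hk₀⟩ : ∃ k₀, ∀ k, f k₀ ≤ f k := by
    have hne : (Set.range f).Nonempty := ⟨f 0, 0, rfl⟩
    obtain ⟨k₀, hk₀⟩ := Nat.sInf_mem hne
    exact ⟨k₀, fun k => hk₀ ▸ Nat.sInf_le ⟨k, rfl⟩⟩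
  have hSsub : ∀ k, S (N + k) ⊆ ↑𝔉 :=
    fun k => (hchain N (N + k) (by omega) le_rfl).trans hfin
  have hSeq : ∀ k, S (N + k) = ↑(𝔉.filter (fun x => x ∈ S (N + k))) := by
    intro k
    ext x
    simp only [Finset.coe_filter, Set.mem_setOf_eq]
    exact ⟨fun hx => ⟨hSsub k hx, hx⟩, fun hx => hx.2⟩
  refine ⟨N + k₀, by omega, fun n hn => ?_⟩
  obtain ⟨k, rfl, hk⟩ : ∃ k, n = N + k ∧ k₀ ≤ k := ⟨n - N, by omega, by omega⟩
  have h1 : S (N + k) ⊆ S (N + k₀) := hchain (N + k₀) (N + k) (by omega) (by omega)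
  have hsub : 𝔉.filter (fun x => x ∈ S (N + k)) ⊆ 𝔉.filter (fun x => x ∈ S (N + k₀)) := by
    intro x hx
    rw [Finset.mem_filter] at hx ⊢
    exact ⟨hx.1, h1 hx.2⟩
  have heq := Finset.eq_of_subset_of_card_le hsub (hk₀ k)
  rw [hSeq k, hSeq k₀, heq]

variable [IsNoetherianRing R] [Module.Finite R M]

/-- Finiteness of associated primes of a subquotient. -/
theorem ass_map_finite (T B : Submodule R M) (hBT : B ≤ T) :
    ∃ 𝔉 : Finset (Ideal R), associatedPrimes R ↥(T.map B.mkQ) ⊆ ↑𝔉 := by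
  obtain ⟨𝔉, h⟩ := lemmaS (⊤ : Ideal R) (Ideal.stableFiltration ⊤ T)
    (Ideal.stableFiltration_stable _ _) (fun _ => B)
    (fun n => by
      show B ≤ (⊤ : Ideal R) ^ n • T
      rw [Ideal.top_pow, Submodule.top_smul]
      exact hBT)
    (fun n => by rw [Submodule.top_smul])
  refine ⟨𝔉, ?_⟩
  have h0 := h 0
  have heq : (Ideal.stableFiltration (⊤ : Ideal R) T).N 0 = T := by
    show (⊤ : Ideal R) ^ 0 • T = T
    rw [Ideal.top_pow, Submodule.top_smul]
  rwa [heq] at h0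

/-- Per-prime eventual monotonicity of membership in `Ass (P.N n / D n)`. -/
theorem thmA_step (I : Ideal R) (P : I.Filtration M) (hP : P.Stable)
    (D : ℕ → Submodule R M) (hD : ∀ n, D n ≤ P.N n) (hDs : ∀ n, I • D n ≤ D (n + 1))
    (hDmono : ∀ n, D (n + 1) ≤ D n) (p : Ideal R) (hp : p.IsPrime) :
    ∃ n₀, ∀ n, n₀ ≤ n → p ∈ associatedPrimes R ↥((P.N (n + 1)).map (D (n + 1)).mkQ) →
      p ∈ associatedPrimes R ↥((P.N n).map (D n).mkQ) := by
  classical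
  set Kf : I.Filtration M :=
    ⟨fun n => ⨅ (r : ↥p), (D n).comap ((r : R) • (LinearMap.id : M →ₗ[R] M)),
      fun n => le_iInf (fun r => (iInf_le _ r).trans (Submodule.comap_mono (hDmono n))),
      fun n => by
        apply le_iInf
        intro r
        apply Submodule.smul_le.mpr
        intro a haI y hy
        rw [Submodule.mem_comap, LinearMap.smul_apply, LinearMap.id_apply]
        have hry : (r : R) • y ∈ D n := by
          have h1 := (Submodule.mem_iInf _).mp hy r
          rwa [Submodule.mem_comap, LinearMap.smul_apply, LinearMap.id_apply] at h1
        have h3 : a • ((r : R) • y) ∈ I • D n := Submodule.smul_mem_smul haI hry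
        have h2 := hDs n h3
        rwa [smul_comm] at h2⟩ with hKf
  have hmemK : ∀ (n : ℕ) (y : M), y ∈ Kf.N n ↔ ∀ r : R, r ∈ p → r • y ∈ D n := by
    intro n y
    show y ∈ ⨅ (r : ↥p), (D n).comap _ ↔ _
    rw [Submodule.mem_iInf]
    constructor
    · intro h r hr
      have h1 := h ⟨r, hr⟩
      rwa [Submodule.mem_comap, LinearMap.smul_apply, LinearMap.id_apply] at h1
    · intro h r
      rw [Submodule.mem_comap, LinearMap.smul_apply, LinearMap.id_apply]
      exact h r.1 r.2
  obtain ⟨n₀, hn₀⟩ := hP.inter_right (F' := Kf)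
  refine ⟨n₀, fun n hn hass => ?_⟩
  obtain ⟨_, ξ, hξ⟩ := (isAssociatedPrime_iff).mp hass
  obtain ⟨w, hwP, hwval⟩ := ξ.2
  have hξne : (ξ : M ⧸ D (n + 1)) ≠ 0 := by
    intro h0
    apply hp.ne_top
    rw [hξ, eq_top_iff]
    intro r _
    rw [Submodule.mem_colon_singleton, Submodule.mem_bot]
    apply Subtype.ext
    show r • (ξ : M ⧸ D (n + 1)) = 0
    rw [h0, smul_zero]
  have hmemann : ∀ r : R, r ∈ p ↔ r • w ∈ D (n + 1) := by
    intro r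
    rw [hξ, Submodule.mem_colon_singleton, Submodule.mem_bot]
    constructor
    · intro hr
      have h1 : r • (ξ : M ⧸ D (n + 1)) = 0 := congrArg Subtype.val hr
      rw [← hwval, Submodule.mkQ_apply, ← Submodule.Quotient.mk_smul] at h1
      exact (Submodule.Quotient.mk_eq_zero _).mp h1
    · intro hr
      apply Subtype.ext
      show r • (ξ : M ⧸ D (n + 1)) = 0
      rw [← hwval, Submodule.mkQ_apply, ← Submodule.Quotient.mk_smul]
      exact (Submodule.Quotient.mk_eq_zero _).mpr hr
  have hwV : w ∈ (P ⊓ Kf).N (n + 1) := by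
    rw [Ideal.Filtration.inf_N]
    exact ⟨hwP, (hmemK (n + 1) w).mpr (fun r hr => (hmemann r).mp hr)⟩
  rw [← hn₀ n hn] at hwV
  -- find a good element in degree n
  have hgood : ∃ y, y ∈ (P ⊓ Kf).N n ∧ ∀ s, s • y ∈ D n → s ∈ p := by
    by_contra hcon
    push_neg at hcon
    have hΦ : ∃ s, s ∉ p ∧ s • w ∈ D (n + 1) := by
      refine Submodule.smul_induction_on hwV ?_ ?_
      · intro a haI y hy
        obtain ⟨s, hs1, hs2⟩ := hcon y hy
        refine ⟨s, hs2, ?_⟩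
        have : a • (s • y) ∈ I • D n := Submodule.smul_mem_smul haI hs1
        have h2 := hDs n this
        rwa [smul_comm] at h2
      · rintro z₁ z₂ ⟨s₁, hs₁, hd₁⟩ ⟨s₂, hs₂, hd₂⟩
        refine ⟨s₁ * s₂, fun hmem => ?_, ?_⟩
        · rcases hp.mem_or_mem hmem with h | h
          · exact hs₁ h
          · exact hs₂ h
        · rw [smul_add]
          apply Submodule.add_mem
          · rw [mul_comm, mul_smul]
            exact Submodule.smul_mem _ _ hd₁
          · rw [mul_smul]
            exact Submodule.smul_mem _ _ hd₂
    obtain ⟨s, hs, hsw⟩ := hΦ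
    exact hs ((hmemann s).mpr hsw)
  obtain ⟨y, hyV, hy⟩ := hgood
  rw [Ideal.Filtration.inf_N] at hyV
  refine (isAssociatedPrime_iff).mpr ⟨hp, ⟨(D n).mkQ y, Submodule.mem_map_of_mem hyV.1⟩, ?_⟩
  ext r
  rw [Submodule.mem_colon_singleton, Submodule.mem_bot]
  have hsmul : r • (⟨(D n).mkQ y, Submodule.mem_map_of_mem hyV.1⟩ :
      ↥((P.N n).map (D n).mkQ)) = 0 ↔ r • y ∈ D n := by
    rw [Subtype.ext_iff]
    show r • ((D n).mkQ y) = 0 ↔ _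
    rw [Submodule.mkQ_apply, ← Submodule.Quotient.mk_smul, Submodule.Quotient.mk_eq_zero]
  rw [hsmul]
  exact ⟨fun hr => (hmemK n y).mp hyV.2 r hr, fun hr => hy r hr⟩

/-- Theorem A: eventual constancy of `Ass (P.N n / D n)`. -/
theorem thmA (I : Ideal R) (P : I.Filtration M) (hP : P.Stable)
    (D : ℕ → Submodule R M) (hD : ∀ n, D n ≤ P.N n) (hDs : ∀ n, I • D n ≤ D (n + 1))
    (hDmono : ∀ n, D (n + 1) ≤ D n) :
    ∃ n₀, ∀ n, n₀ ≤ n →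
      associatedPrimes R ↥((P.N n).map (D n).mkQ) =
      associatedPrimes R ↥((P.N n₀).map (D n₀).mkQ) := by
  obtain ⟨𝔉, h𝔉⟩ := lemmaS I P hP D hD hDs
  have hstep : ∀ q : Ideal R, ∃ n₀, ∀ n, n₀ ≤ n →
      q ∈ associatedPrimes R ↥((P.N (n + 1)).map (D (n + 1)).mkQ) →
      q ∈ associatedPrimes R ↥((P.N n).map (D n).mkQ) := by
    intro q
    by_cases hq : q.IsPrime
    · exact thmA_step I P hP D hD hDs hDmono q hq
    · exact ⟨0, fun n _ hmem => absurd hmem.isPrime hq⟩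
  choose np hnp using hstep
  set N₁ := 𝔉.sup np with hN₁
  have hdec : ∀ n, N₁ ≤ n →
      associatedPrimes R ↥((P.N (n + 1)).map (D (n + 1)).mkQ) ⊆
      associatedPrimes R ↥((P.N n).map (D n).mkQ) := by
    intro n hn q hq
    exact hnp q n (le_trans (Finset.le_sup (h𝔉 (n + 1) hq)) hn) hq
  obtain ⟨N₀, hN₀, hconst⟩ := stabilize_of_antitone
    (fun n => associatedPrimes R ↥((P.N n).map (D n).mkQ)) 𝔉 N₁ hdec (h𝔉 N₁)
  exact ⟨N₀, hconst⟩

end Sec3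


/-- Let `R` be a commutative Noetherian ring, `I` an ideal, and
`L →α M →β N` a complex of finitely generated `R`-modules with submodules
`L' ⊆ L`, `M' ⊆ M`, `N' ⊆ N` satisfying `α(L') ⊆ M'` and `β(M') ⊆ N'`.  Let `c ∈ ℕ` and
`L₁, L₂ ⊆ L` with `I^c L' ⊆ L₂`.  For `n ≥ c`, let `H(n)` be the homology
`ker(βₙ)/im(αₙ)` of the induced complex
`(L₁ + I^{n-c}L₂)/IⁿL' →αₙ M/IⁿM' →βₙ N/IⁿN'`.
Here `βₙ` is the map induced by `β` on the quotients (characterized by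
`βₙ ∘ mkQ = mkQ ∘ β`), and the image of `αₙ` is the image of `L₁ + I^{n-c}L₂` under
`mkQ ∘ α`; the homology is the quotient of `ker βₙ` by the image of `αₙ` (intersected
with `ker βₙ`, which does not change it since the sequence is a complex).
Then the sets `Ass_R H(n)` stabilize. -/
theorem homology_associatedPrimes_stabilize
    {R : Type u} [CommRing R] [IsNoetherianRing R] (I : Ideal R)
    {L M N : Type u} [AddCommGroup L] [Module R L] [AddCommGroup M] [Module R M]
    [AddCommGroup N] [Module R N]
    [Module.Finite R L] [Module.Finite R M] [Module.Finite R N]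
    (α : L →ₗ[R] M) (β : M →ₗ[R] N) (hβα : β ∘ₗ α = 0)
    (L' : Submodule R L) (M' : Submodule R M) (N' : Submodule R N)
    (hα : L'.map α ≤ M') (hβ : M'.map β ≤ N')
    (c : ℕ) (L₁ L₂ : Submodule R L) (hL₂ : I ^ c • L' ≤ L₂)
    (β' : ∀ n : ℕ, (M ⧸ (I ^ n • M' : Submodule R M)) →ₗ[R] (N ⧸ (I ^ n • N' : Submodule R N)))
    (hβ' : ∀ n : ℕ, (β' n) ∘ₗ (I ^ n • M' : Submodule R M).mkQ
      = (I ^ n • N' : Submodule R N).mkQ ∘ₗ β) :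
    ∃ N₀ : ℕ, c ≤ N₀ ∧ ∀ n : ℕ, N₀ ≤ n →
      associatedPrimes R
        (↥(LinearMap.ker (β' n)) ⧸
          (Submodule.comap (LinearMap.ker (β' n)).subtype
            (((L₁ ⊔ I ^ (n - c) • L₂).map α).map (I ^ n • M' : Submodule R M).mkQ))) =
      associatedPrimes R
        (↥(LinearMap.ker (β' N₀)) ⧸
          (Submodule.comap (LinearMap.ker (β' N₀)).subtype
            (((L₁ ⊔ I ^ (N₀ - c) • L₂).map α).map (I ^ N₀ • M' : Submodule R M).mkQ))) := by
  classical
  set F : Submodule R M := L₁.map α with hF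
  set G : Submodule R M := L₂.map α with hG
  set T' : ℕ → Submodule R M := fun n => Submodule.comap β (I ^ n • N') with hT'
  set B' : ℕ → Submodule R M := fun n => (F ⊔ I ^ (n - c) • G) ⊔ I ^ n • M' with hB'
  -- basic facts
  have hFker : F ≤ LinearMap.ker β := by
    rw [hF]
    rintro y ⟨l, _, rfl⟩
    exact LinearMap.congr_fun hβα l
  have hGker : G ≤ LinearMap.ker β := by
    rw [hG]
    rintro y ⟨l, _, rfl⟩
    exact LinearMap.congr_fun hβα l
  have hkerT' : ∀ n, LinearMap.ker β ≤ T' n := by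
    intro n x hx
    rw [hT', Submodule.mem_comap, show β x = 0 from hx]
    exact Submodule.zero_mem _
  have hM'T : ∀ n, (I ^ n • M' : Submodule R M) ≤ T' n := by
    intro n
    rw [hT', ← Submodule.map_le_iff_le_comap, Submodule.map_smul'']
    exact smul_mono_right _ hβ
  have hB'T' : ∀ n, B' n ≤ T' n := by
    intro n
    rw [hB']
    exact sup_le (sup_le (hFker.trans (hkerT' n))
      ((Submodule.smul_le_right).trans (hGker.trans (hkerT' n)))) (hM'T n)
  have hT'mono : ∀ n, T' (n + 1) ≤ T' n := by
    intro n
    exact Submodule.comap_mono (smul_mono_left (Ideal.pow_le_pow_right (Nat.le_succ n)))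
  have hB'mono : ∀ n, c ≤ n → B' (n + 1) ≤ B' n := by
    intro n hn
    rw [hB']
    refine sup_le_sup (sup_le_sup le_rfl ?_) ?_
    · exact smul_mono_left (Ideal.pow_le_pow_right (by omega))
    · exact smul_mono_left (Ideal.pow_le_pow_right (by omega))
  have hB's : ∀ n, c ≤ n → I • B' n ≤ B' (n + 1) := by
    intro n hn
    rw [hB', Submodule.smul_sup, Submodule.smul_sup]
    refine sup_le_sup (sup_le_sup Submodule.smul_le_right (le_of_eq ?_)) (le_of_eq ?_)
    · rw [← mul_smul, ← pow_succ', show n + 1 - c = (n - c) + 1 by omega, pow_succ']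
    · rw [← mul_smul, ← pow_succ']
  have hIT' : ∀ n, I • T' (n + 1) ≤ T' (n + 2) := by
    intro n
    apply Submodule.smul_le.mpr
    intro a haI x hx
    rw [hT', Submodule.mem_comap, map_smul]
    have h1 : a • β x ∈ I • (I ^ (n + 1) • N') := Submodule.smul_mem_smul haI hx
    rwa [← mul_smul, ← pow_succ'] at h1
  -- the stable filtration C
  set C : I.Filtration M :=
    ⟨fun n => T' (n + 1) ⊓ (I ^ n • M' : Submodule R M),
      fun n => inf_le_inf (hT'mono (n + 1))
        (smul_mono_left (Ideal.pow_le_pow_right (Nat.le_succ n))),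
      fun n => by
        refine le_inf (le_trans (smul_mono_right _ inf_le_left) (hIT' n)) ?_
        refine le_trans (smul_mono_right _ inf_le_right) (le_of_eq ?_)
        rw [← mul_smul, ← pow_succ']⟩ with hC
  have hCstable : C.Stable := by
    refine Ideal.Filtration.Stable.of_le (Ideal.stableFiltration_stable I M') ?_
    intro n
    exact inf_le_right
  obtain ⟨s, hs⟩ := hCstable
  -- Δ and its stability
  set m := c + s with hm
  set Δ : ℕ → Submodule R M := fun n => I ^ (n - c) • G ⊔ C.N n with hΔdef
  have hCiter : ∀ j, C.N (s + j) = I ^ j • C.N s := by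
    intro j
    induction j with
    | zero => rw [Nat.add_zero, pow_zero, one_smul]
    | succ j ih =>
      rw [show s + (j + 1) = (s + j) + 1 by omega, ← hs (s + j) (by omega), ih,
        ← mul_smul, ← pow_succ']
  have hΔ : ∀ n, m ≤ n → Δ n = I ^ (n - m) • Δ m := by
    intro n hn
    rw [hΔdef]
    simp only []
    rw [Submodule.smul_sup]
    congr 1
    · rw [← mul_smul, ← pow_add, show n - m + (m - c) = n - c by omega]
    · show C.N n = I ^ (n - m) • C.N m
      have h1 : C.N n = I ^ (n - s) • C.N s := by
        have := hCiter (n - s)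
        rwa [show s + (n - s) = n by omega] at this
      have h2 : C.N m = I ^ (m - s) • C.N s := by
        have := hCiter (m - s)
        rwa [show s + (m - s) = m by omega] at this
      rw [h1, h2, ← mul_smul, ← pow_add, show n - m + (m - s) = n - s by omega]
  -- the modular-law identity
  have hident : ∀ n, m ≤ n → T' (n + 1) ⊓ B' n = B' (n + 1) ⊔ Δ n := by
    intro n hn
    have hcn : c ≤ n := by omega
    have hsub : F ⊔ I ^ (n - c) • G ≤ T' (n + 1) :=
      sup_le (hFker.trans (hkerT' (n + 1)))
        ((Submodule.smul_le_right).trans (hGker.trans (hkerT' (n + 1))))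
    have hmod : T' (n + 1) ⊓ B' n = (F ⊔ I ^ (n - c) • G) ⊔ C.N n := by
      rw [hB']
      simp only []
      rw [inf_comm, sup_inf_assoc_of_le _ hsub]
      congr 1
      exact inf_comm _ _
    rw [hmod]
    apply le_antisymm
    · refine sup_le (sup_le ?_ ?_) ?_
      · exact le_sup_of_le_left (le_sup_of_le_left le_sup_left)
      · exact le_sup_of_le_right (le_sup_of_le_left le_rfl)
      · exact le_sup_of_le_right le_sup_right
    · refine sup_le ?_ ?_
      · rw [hB']
        refine sup_le (sup_le ?_ ?_) ?_
        · exact le_sup_of_le_left le_sup_left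
        · refine le_sup_of_le_left (le_sup_of_le_right ?_)
          exact smul_mono_left (Ideal.pow_le_pow_right (by omega))
        · refine le_sup_of_le_right ?_
          refine le_inf (hM'T (n + 1)) ?_
          exact smul_mono_left (Ideal.pow_le_pow_right (by omega))
      · exact sup_le (le_sup_of_le_left le_sup_right) le_sup_right
  -- Theorem A applied to the kernels K_n
  set P : I.Filtration M := I.stableFiltration (Δ m) with hP
  set D : ℕ → Submodule R M := fun j => (I ^ j • Δ m) ⊓ B' (m + 1 + j) with hD
  have hDle : ∀ j, D j ≤ P.N j := fun j => inf_le_left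
  have hDsm : ∀ j, I • D j ≤ D (j + 1) := by
    intro j
    refine le_inf (le_trans (smul_mono_right _ inf_le_left) (le_of_eq ?_))
      (le_trans (smul_mono_right _ inf_le_right) ?_)
    · rw [← mul_smul, ← pow_succ']
    · rw [show m + 1 + (j + 1) = (m + 1 + j) + 1 by omega]
      exact hB's (m + 1 + j) (by omega)
  have hDmono : ∀ j, D (j + 1) ≤ D j := by
    intro j
    refine inf_le_inf ?_ ?_
    · rw [pow_succ', mul_smul]
      exact Submodule.smul_le_right
    · rw [show m + 1 + (j + 1) = (m + 1 + j) + 1 by omega]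
      exact hB'mono (m + 1 + j) (by omega)
  obtain ⟨j₀, hj₀⟩ := thmA I P (Ideal.stableFiltration_stable I (Δ m)) D hDle hDsm hDmono
  -- the K-sets
  set 𝒦 : ℕ → Set (Ideal R) :=
    fun n => associatedPrimes R ↥((T' (n + 1) ⊓ B' n).map (B' (n + 1)).mkQ) with h𝒦def
  have hj₀' : ∀ j, j₀ ≤ j → associatedPrimes R
      ↥((I ^ j • Δ m).map ((I ^ j • Δ m ⊓ B' (m + 1 + j))).mkQ) =
      associatedPrimes R ↥((I ^ j₀ • Δ m).map ((I ^ j₀ • Δ m ⊓ B' (m + 1 + j₀))).mkQ) := by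
    intro j hj
    exact hj₀ j hj
  have h𝒦 : ∀ n, m ≤ n → 𝒦 n = associatedPrimes R
      ↥((I ^ (n - m) • Δ m).map ((I ^ (n - m) • Δ m ⊓ B' (m + 1 + (n - m)))).mkQ) := by
    intro n hn
    rw [h𝒦def]
    simp only []
    rw [hident n hn, map_sup_mkQ]
    have e1 : associatedPrimes R ↥((Δ n).map (B' (n + 1)).mkQ) =
        associatedPrimes R ↥((Δ n).map ((Δ n ⊓ B' (n + 1))).mkQ) := by
      rw [← assq_eq_assmap, ← assq_eq_assmap]
      congr 2
      rw [Submodule.comap_inf]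
      rw [Submodule.comap_subtype_self, top_inf_eq]
      all_goals rw [Submodule.comap_inf, Submodule.comap_subtype_self, top_inf_eq]
    rw [e1, hΔ n hn, show m + 1 + (n - m) = n + 1 by omega]
  have h𝒦const : ∀ n, m + j₀ ≤ n → 𝒦 n = 𝒦 (m + j₀) := by
    intro n hn
    rw [h𝒦 n (by omega), h𝒦 (m + j₀) (by omega),
      hj₀' (n - m) (by omega), hj₀' (m + j₀ - m) (by omega)]
  -- bootstrap inequalities
  set A : ℕ → Set (Ideal R) := fun n => associatedPrimes R ↥((T' n).map (B' n).mkQ) with hA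
  have hup : ∀ n, m ≤ n → A (n + 1) ⊆ 𝒦 n ∪ A n := by
    intro n hn
    have hCB : B' (n + 1) ≤ T' (n + 1) ⊓ B' n := le_inf (hB'T' (n + 1)) (hB'mono n (by omega))
    intro p hp
    rcases ass_map_subset_union (B' (n + 1)) (T' (n + 1) ⊓ B' n) (T' (n + 1)) hCB inf_le_left
      hp with h | h
    · exact Or.inl h
    · right
      show p ∈ associatedPrimes R ↥((T' n).map (B' n).mkQ)
      have e1 : associatedPrimes R ↥((T' (n + 1)).map (T' (n + 1) ⊓ B' n).mkQ) =
          associatedPrimes R (↥(T' (n + 1)) ⧸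
            Submodule.comap (T' (n + 1)).subtype (T' (n + 1) ⊓ B' n)) :=
        (assq_eq_assmap _ _).symm
      rw [e1] at h
      rw [Submodule.comap_inf] at h
      rw [LinearEquiv.AssociatedPrimes.eq
        (LinearMap.quotientInfEquivSupQuotient (T' (n + 1)) (B' n))] at h
      rw [assq_eq_assmap] at h
      exact ass_map_mono (B' n) (sup_le (hT'mono n) (hB'T' n)) h
  have hlow : ∀ n, m ≤ n → 𝒦 n ⊆ A (n + 1) := by
    intro n hn
    exact ass_map_mono (B' (n + 1)) inf_le_left
  have hdec : ∀ n, m + j₀ + 1 ≤ n → A (n + 1) ⊆ A n := by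
    intro n hn
    refine (hup n (by omega)).trans ?_
    apply Set.union_subset ?_ le_rfl
    have e1 : 𝒦 n = 𝒦 (n - 1) := by
      rw [h𝒦const n (by omega), h𝒦const (n - 1) (by omega)]
    rw [e1]
    have := hlow (n - 1) (by omega)
    rwa [show n - 1 + 1 = n by omega] at this
  obtain ⟨𝔉, h𝔉⟩ := ass_map_finite (T' (m + j₀ + 1)) (B' (m + j₀ + 1)) (hB'T' _)
  obtain ⟨N₀, hN₀ge, hN₀⟩ := stabilize_of_antitone A 𝔉 (m + j₀ + 1) hdec h𝔉
  -- translate the statement's homology to A n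
  have hH : ∀ n, associatedPrimes R
      (↥(LinearMap.ker (β' n)) ⧸
        (Submodule.comap (LinearMap.ker (β' n)).subtype
          (((L₁ ⊔ I ^ (n - c) • L₂).map α).map (I ^ n • M' : Submodule R M).mkQ))) = A n := by
    intro n
    have hker : LinearMap.ker (β' n) = (T' n).map (I ^ n • M' : Submodule R M).mkQ := by
      ext y
      obtain ⟨x, rfl⟩ := (I ^ n • M' : Submodule R M).mkQ_surjective y
      have happ : β' n ((I ^ n • M' : Submodule R M).mkQ x)
          = (I ^ n • N' : Submodule R N).mkQ (β x) := LinearMap.congr_fun (hβ' n) x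
      constructor
      · intro hy
        rw [LinearMap.mem_ker, happ, Submodule.mkQ_apply, Submodule.Quotient.mk_eq_zero] at hy
        exact ⟨x, hy, rfl⟩
      · rintro ⟨t, ht, htx⟩
        rw [LinearMap.mem_ker, happ, Submodule.mkQ_apply, Submodule.Quotient.mk_eq_zero]
        have hxt : x - t ∈ (I ^ n • M' : Submodule R M) := by
          have h1 : (I ^ n • M' : Submodule R M).mkQ (x - t) = 0 := by
            rw [map_sub, htx, sub_self]
          rwa [Submodule.mkQ_apply, Submodule.Quotient.mk_eq_zero] at h1
        have hxT : x ∈ T' n := by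
          have := Submodule.add_mem _ (hM'T n hxt) ht
          simpa [sub_add_cancel] using this
        exact hxT
    have himg : ((L₁ ⊔ I ^ (n - c) • L₂).map α).map (I ^ n • M' : Submodule R M).mkQ
        = (B' n).map (I ^ n • M' : Submodule R M).mkQ := by
      rw [hB']
      simp only []
      rw [Submodule.map_sup (F ⊔ I ^ (n - c) • G), Submodule.map_sup, Submodule.map_smul'']
      have hbot : (I ^ n • M' : Submodule R M).map (I ^ n • M' : Submodule R M).mkQ = ⊥ := by
        rw [eq_bot_iff]
        rintro z ⟨w, hw, rfl⟩
        simpa [Submodule.mkQ_apply, Submodule.Quotient.mk_eq_zero] using hw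
      rw [hbot, sup_bot_eq, ← hF, ← hG]
    rw [hker, himg]
    rw [LinearEquiv.AssociatedPrimes.eq (sqThird (I ^ n • M' : Submodule R M) (B' n) (T' n)
      le_sup_right)]
  refine ⟨N₀, by omega, fun n hn => ?_⟩
  rw [hH n, hH N₀, hN₀ n hn]
end Sec2
end

section
/- Let R be a commutative Noetherian ring and let {F_λ}_{λ∈Λ} be a direct system, indexed by a directed partially ordered set Λ, of covariant R-linear functors from finitely generated R-modules to themselves, with natural transformations T_λ : F_λ → F to a covariant R-linear functor F such that for every finitely generated R-module N, the module F(N) together with the maps (T_λ)_N is the colimit of the directed system {F_λ(N)}. If F is finitely generated, then there exists λ₀ ∈ Λ such that (T_{λ₀})_N : F_{λ₀}(N) → F(N) is surjective for every finitely generated R-module N. In particular, if every (T_λ)_N is injective, then T_λ is a natural isomorphism for every λ ≥ λ₀. -/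
open CategoryTheory

universe u v

/-- A covariant `R`-linear functor `F` on finitely generated `R`-modules is *finitely
generated* if there is an objectwise surjective natural transformation `h_K → F`,
where `h_K = Hom_R(K, -)` for some finitely generated `R`-module `K`. -/
def CategoryTheory.Functor.IsFinitelyGeneratedFunctor {R : Type u} [CommRing R]
    (F : FGModuleCat R ⥤ FGModuleCat R) : Prop :=
  ∃ (K : FGModuleCat R) (T : ∀ X : FGModuleCat R, (K ⟶ X) →ₗ[R] F.obj X),
    (∀ (X Y : FGModuleCat R) (g : X ⟶ Y) (φ : K ⟶ X), F.map g (T X φ) = T Y (φ ≫ g)) ∧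
    (∀ X : FGModuleCat R, Function.Surjective (T X))

/-- Let `R` be a commutative Noetherian ring and `{F_λ}` a direct
system, over a directed poset `Λ`, of covariant `R`-linear functors on finitely
generated `R`-modules, with transition natural transformations `t : F_λ → F_μ`
(`λ ≤ μ`) satisfying the usual compatibilities, and natural transformations
`T_λ : F_λ → F` compatible with the transitions, such that each `F(X)` together with
the maps `(T_λ)_X` is the colimit of the directed system `{F_λ(X)}` (expressed by the
standard directed-colimit conditions: joint surjectivity, and every element killed by
`T_λ` dies at some later stage).  If `F` is finitely generated, then there is `λ₀` such
that `(T_{λ₀})_X` is surjective for every `X`; in particular, if every `(T_λ)_X` is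
injective, then `T_μ` is a natural isomorphism for every `μ ≥ λ₀`. -/
theorem direct_system_functor_stabilizes
    {R : Type u} [CommRing R] [IsNoetherianRing R]
    {Λ : Type v} [Preorder Λ] [IsDirected Λ (· ≤ ·)]
    (Fl : Λ → (FGModuleCat R ⥤ FGModuleCat R))
    [∀ l, (Fl l).Additive] [∀ l, (Fl l).Linear R]
    (t : ∀ {l m : Λ}, l ≤ m → (Fl l ⟶ Fl m))
    (ht_refl : ∀ l : Λ, t (le_refl l) = 𝟙 (Fl l))
    (ht_comp : ∀ {l m k : Λ} (h₁ : l ≤ m) (h₂ : m ≤ k), t h₁ ≫ t h₂ = t (h₁.trans h₂))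
    (F : FGModuleCat R ⥤ FGModuleCat R) [F.Additive] [F.Linear R]
    (T : ∀ l : Λ, Fl l ⟶ F)
    (hT : ∀ {l m : Λ} (h : l ≤ m), t h ≫ T m = T l)
    (hsurj : ∀ (X : FGModuleCat R) (x : F.obj X), ∃ (l : Λ) (y : (Fl l).obj X),
      (T l).app X y = x)
    (hker : ∀ (l : Λ) (X : FGModuleCat R) (y : (Fl l).obj X), (T l).app X y = 0 →
      ∃ (m : Λ) (h : l ≤ m), (t h).app X y = 0)
    (hF : F.IsFinitelyGeneratedFunctor) :
    ∃ l₀ : Λ, (∀ X : FGModuleCat R, Function.Surjective ((T l₀).app X)) ∧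
      ((∀ (l : Λ) (X : FGModuleCat R), Function.Injective ((T l).app X)) →
        ∀ m : Λ, l₀ ≤ m → IsIso (T m)) := by

  obtain ⟨K, S, hnat, hSsurj⟩ := hF
  obtain ⟨l₀, y, hy⟩ := hsurj K (S K (𝟙 K))
  have key : ∀ X : FGModuleCat R, Function.Surjective ((T l₀).app X) := by
    intro X x
    obtain ⟨φ, hφ⟩ := hSsurj X x
    refine ⟨(Fl l₀).map φ y, ?_⟩
    have hn : (T l₀).app X ((Fl l₀).map φ y) = F.map φ ((T l₀).app K y) :=
      ConcreteCategory.congr_hom ((T l₀).naturality φ) y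
    rw [hn, hy, hnat K X φ (𝟙 K), Category.id_comp, hφ]
  refine ⟨l₀, key, ?_⟩
  intro hinj m hm
  have hsurjm : ∀ X : FGModuleCat R, Function.Surjective ((T m).app X) := by
    intro X x
    obtain ⟨z, hz⟩ := key X x
    refine ⟨(t hm).app X z, ?_⟩
    have : (T m).app X ((t hm).app X z) = (T l₀).app X z :=
      ConcreteCategory.congr_hom (congrArg (fun (α : Fl l₀ ⟶ F) => α.app X) (hT hm)) z
    rw [this, hz]
  have : ∀ X : FGModuleCat R, IsIso ((T m).app X) := by
    intro X
    have hb : Function.Bijective ((T m).app X) := ⟨hinj m X, hsurjm X⟩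
    let e := LinearEquiv.ofBijective (((T m).app X).hom.hom : ((Fl m).obj X).obj →ₗ[R] (F.obj X).obj) hb
    exact ⟨FGModuleCat.ofHom (e.symm : (F.obj X).obj →ₗ[R] ((Fl m).obj X).obj),
      by ext z; exact e.symm_apply_apply z, by ext z; exact e.apply_symm_apply z⟩
  exact NatIso.isIso_of_isIso_app (T m)
end

section
/- Let R be a commutative ring and S a nonempty subset of R. Consider the conditions: (a) S is coprincipal, i.e., there exists s ∈ S with s ∈ ⋂_{r∈S} Rr; (b) there exist commutative rings R₁, R₂ and a ring isomorphism φ : R ≅ R₁ × R₂ such that φ(S) contains an element of the form (u, 0) with u a unit of R₁, and for every s ∈ S, writing φ(s) = (s₁, s₂), the element s₁ is a unit of R₁. Then (b) implies (a); and if moreover S is multiplicatively closed (closed under products and containing some element), then (a) implies (b). -/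
universe u

/-- Let `R` be a commutative ring and `S` a nonempty subset of `R`.
Consider the conditions:
(a) `S` is coprincipal, i.e. there exists `s ∈ S` with `s ∈ Rr` for every `r ∈ S`;
(b) there are commutative rings `R₁`, `R₂` and a ring isomorphism `φ : R ≅ R₁ × R₂`
such that `φ(S)` contains an element `(u, 0)` with `u ∈ R₁ˣ`, and `(φ s).1` is a unit of
`R₁` for every `s ∈ S`.
Then (b) implies (a), and if `S` is moreover multiplicatively closed then (a)
implies (b). -/
theorem coprincipal_iff_ring_decomposition
    {R : Type u} [CommRing R] (S : Set R) (hne : S.Nonempty) :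
    ((∃ (R₁ R₂ : CommRingCat.{u}) (φ : R ≃+* (R₁ × R₂)),
        (∃ s ∈ S, ∃ u : (R₁ : Type u)ˣ, φ s = ((u : R₁), (0 : R₂))) ∧
        (∀ s ∈ S, IsUnit (φ s).1)) →
      (∃ s ∈ S, ∀ r ∈ S, ∃ a : R, s = a * r)) ∧
    ((∀ a ∈ S, ∀ b ∈ S, a * b ∈ S) →
      (∃ s ∈ S, ∀ r ∈ S, ∃ a : R, s = a * r) →
      (∃ (R₁ R₂ : CommRingCat.{u}) (φ : R ≃+* (R₁ × R₂)),
        (∃ s ∈ S, ∃ u : (R₁ : Type u)ˣ, φ s = ((u : R₁), (0 : R₂))) ∧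
        (∀ s ∈ S, IsUnit (φ s).1))) := by
  constructor
  · rintro ⟨R₁, R₂, φ, ⟨s, hs, u, hsu⟩, hall⟩
    refine ⟨s, hs, fun r hr => ?_⟩
    obtain ⟨v, hv⟩ := hall r hr
    refine ⟨φ.symm ((u : R₁) * ((v⁻¹ : R₁ˣ) : R₁), 0), ?_⟩
    apply φ.injective
    rw [map_mul, φ.apply_symm_apply, hsu]
    ext
    · show (u : R₁) = (u : R₁) * ((v⁻¹ : R₁ˣ) : R₁) * (φ r).1
      rw [← hv]
      simp [mul_assoc]
    · show (0 : R₂) = 0 * (φ r).2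
      rw [zero_mul]
  · rintro hmul ⟨s, hs, hcop⟩
    obtain ⟨b, hb⟩ := hcop (s * s) (hmul s hs s hs)
    set e : R := b * s with he
    have hidem : e * e = e := by
      have h : e * e = b * (b * (s * s)) := by ring
      rw [h, ← hb]
    have hse : e * s = s := by rw [he]; linear_combination -hb
    set I : Ideal R := Ideal.span {1 - e} with hI
    set J : Ideal R := Ideal.span {e} with hJ
    set φ0 : R →+* (R ⧸ I) × (R ⧸ J) :=
      (Ideal.Quotient.mk I).prod (Ideal.Quotient.mk J) with hφ0
    have hinj : Function.Injective φ0 := by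
      rw [injective_iff_map_eq_zero]
      intro x hx
      have h1 : Ideal.Quotient.mk I x = 0 := congrArg Prod.fst hx
      have h2 : Ideal.Quotient.mk J x = 0 := congrArg Prod.snd hx
      obtain ⟨c, hc⟩ := Ideal.mem_span_singleton'.mp (Ideal.Quotient.eq_zero_iff_mem.mp h1)
      obtain ⟨d, hd⟩ := Ideal.mem_span_singleton'.mp (Ideal.Quotient.eq_zero_iff_mem.mp h2)
      have hxe : x * e = 0 := by
        calc x * e = c * (1 - e) * e := by rw [hc]
        _ = c * (e - e * e) := by ring
        _ = 0 := by rw [hidem]; ring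
      calc x = d * e := hd.symm
      _ = d * (e * e) := by rw [hidem]
      _ = (d * e) * e := by ring
      _ = x * e := by rw [hd]
      _ = 0 := hxe
    have hsurj : Function.Surjective φ0 := by
      rintro ⟨x, y⟩
      obtain ⟨a, rfl⟩ := Ideal.Quotient.mk_surjective x
      obtain ⟨c, rfl⟩ := Ideal.Quotient.mk_surjective y
      refine ⟨a * e + c * (1 - e), Prod.ext ?_ ?_⟩
      · exact Ideal.Quotient.eq.mpr (Ideal.mem_span_singleton'.mpr ⟨c - a, by ring⟩)
      · exact Ideal.Quotient.eq.mpr (Ideal.mem_span_singleton'.mpr ⟨a - c, by ring⟩)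
    let φ : R ≃+* ((R ⧸ I) × (R ⧸ J)) := RingEquiv.ofBijective φ0 ⟨hinj, hsurj⟩
    have hmkE : Ideal.Quotient.mk I e = 1 := by
      rw [← map_one (Ideal.Quotient.mk I)]
      exact Ideal.Quotient.eq.mpr (Ideal.mem_span_singleton'.mpr ⟨-1, by ring⟩)
    have hu : IsUnit (Ideal.Quotient.mk I s) := by
      refine IsUnit.of_mul_eq_one (Ideal.Quotient.mk I b) ?_
      rw [← map_mul, mul_comm, ← he, hmkE]
    have hs0 : Ideal.Quotient.mk J s = 0 := by
      refine Ideal.Quotient.eq_zero_iff_mem.mpr (Ideal.mem_span_singleton'.mpr ⟨s, ?_⟩)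
      linear_combination hse
    refine ⟨CommRingCat.of (R ⧸ I), CommRingCat.of (R ⧸ J), φ, ⟨s, hs, hu.unit, ?_⟩, ?_⟩
    · exact Prod.ext (by rw [IsUnit.unit_spec]; rfl) hs0
    · intro r hr
      obtain ⟨a, ha⟩ := hcop r hr
      have : IsUnit (Ideal.Quotient.mk I a * Ideal.Quotient.mk I r) := by
        rw [← map_mul, ← ha]; exact hu
      exact isUnit_of_mul_isUnit_right this
end

section
/- Let R be a Dedekind domain, I an ideal of R and M a finitely generated R-module. Then there exists N₀ such that the R-modules I^n M / I^{n+1} M for n ≥ N₀ are all isomorphic to each other. In particular, for any covariant R-linear functor F from R-modules to R-modules, the sequence of sets Ass_R F(I^n M / I^{n+1} M) stabilizes. -/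
open CategoryTheory

universe u

open UniqueFactorizationMonoid in
private lemma exists_span_sup_sq {R : Type u} [CommRing R] [IsDomain R] [IsDedekindDomain R]
    (I : Ideal R) : ∃ t ∈ I, I ≤ Ideal.span {t} ⊔ I ^ 2 := by
  classical
  by_cases hTop : I = ⊤
  · exact ⟨1, by simp [hTop], by simp [Ideal.span_singleton_one]⟩
  by_cases hBot : I = ⊥
  · exact ⟨0, by simp [hBot], by simp [hBot]⟩
  set s : Finset (Ideal R) := (normalizedFactors I).toFinset with hs
  have hprime : ∀ p ∈ s, Prime p := fun p hp =>
    prime_of_normalized_factor p (Multiset.mem_toFinset.mp hp)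
  have hx : ∀ p : {x // x ∈ s}, ∃ x, x ∈ (p : Ideal R) ^ ((normalizedFactors I).count (p : Ideal R))
      ∧ x ∉ (p : Ideal R) ^ ((normalizedFactors I).count (p : Ideal R) + 1) := by
    intro p
    obtain ⟨x, h1, h2⟩ := Ideal.exists_mem_pow_notMem_pow_succ (p : Ideal R)
      (hprime p p.2).ne_zero
      (fun h => (hprime p p.2).not_isUnit (by rw [h]; exact Ideal.isUnit_iff.mpr rfl))
      ((normalizedFactors I).count (p : Ideal R))
    exact ⟨x, h1, h2⟩
  choose x hx1 hx2 using hx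
  obtain ⟨y, hy⟩ := IsDedekindDomain.exists_forall_sub_mem_ideal (s := s) (fun p => p)
    (fun p => (normalizedFactors I).count p + 1) hprime
    (fun i _ j _ h => h) x
  -- basic facts about y
  have hy1 : ∀ (p) (hp : p ∈ s), y ∈ p ^ ((normalizedFactors I).count p) := by
    intro p hp
    have := hy p hp
    have : y = (y - x ⟨p, hp⟩) + x ⟨p, hp⟩ := by ring
    rw [this]
    exact add_mem (Ideal.pow_le_pow_right (Nat.le_succ _) (hy p hp)) (hx1 ⟨p, hp⟩)
  have hy2 : ∀ (p) (hp : p ∈ s), y ∉ p ^ ((normalizedFactors I).count p + 1) := by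
    intro p hp hmem
    exact hx2 ⟨p, hp⟩ (by
      have : x ⟨p, hp⟩ = y - (y - x ⟨p, hp⟩) := by ring
      rw [this]
      exact sub_mem hmem (hy p hp))
  -- s is nonempty and y ≠ 0
  have hsne : ∃ p, p ∈ s := by
    obtain ⟨p, hp⟩ := Multiset.exists_mem_of_ne_zero (fun h : normalizedFactors I = 0 => by
      have := prod_normalizedFactors_eq_self hBot
      rw [h, Multiset.prod_zero] at this
      exact hTop (by rw [← this, Ideal.one_eq_top]))
    exact ⟨p, Multiset.mem_toFinset.mpr hp⟩
  have hyne : y ≠ 0 := by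
    obtain ⟨p, hp⟩ := hsne
    intro h
    exact hy2 p hp (by rw [h]; exact zero_mem _)
  have hspanne : Ideal.span {y} ≠ ⊥ := by
    rw [Ne, Ideal.span_singleton_eq_bot]; exact hyne
  -- counting
  have hcount : ∀ p ∈ s, (normalizedFactors (Ideal.span {y})).count p
      = (normalizedFactors I).count p := by
    intro p hp
    haveI : (p : Ideal R).IsPrime := Ideal.isPrime_of_prime (hprime p hp)
    exact Ideal.count_normalizedFactors_eq
      ((Ideal.span_singleton_le_iff_mem _).mpr (hy1 p hp))
      (fun h => hy2 p hp (h (Ideal.mem_span_singleton_self y)))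
  have hymem : y ∈ I := by
    rw [← Ideal.dvd_span_singleton]
    rw [dvd_iff_normalizedFactors_le_normalizedFactors hBot hspanne, Multiset.le_iff_count]
    intro p
    by_cases hp : p ∈ normalizedFactors I
    · rw [hcount p (Multiset.mem_toFinset.mpr hp)]
    · simp [Multiset.count_eq_zero.mpr hp]
  refine ⟨y, hymem, ?_⟩
  have hI2ne : I ^ 2 ≠ ⊥ := by
    exact pow_ne_zero 2 hBot
  rw [sup_eq_prod_inf_factors hspanne hI2ne]
  rw [← Ideal.dvd_iff_le]
  have hle : normalizedFactors (Ideal.span {y}) ∩ normalizedFactors (I ^ 2)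
      ≤ normalizedFactors I := by
    rw [Multiset.le_iff_count]
    intro p
    rw [Multiset.count_inter, normalizedFactors_pow, Multiset.count_nsmul]
    by_cases hp : p ∈ normalizedFactors I
    · rw [hcount p (Multiset.mem_toFinset.mpr hp)]
      exact le_trans (min_le_left _ _) le_rfl
    · have : (normalizedFactors I).count p = 0 := Multiset.count_eq_zero.mpr hp
      rw [this]
      simp
  calc (normalizedFactors (Ideal.span {y}) ∩ normalizedFactors (I ^ 2)).prod
      ∣ (normalizedFactors I).prod := Multiset.prod_dvd_prod_of_le hle
    _ = I := prod_normalizedFactors_eq_self hBot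

section machinery

variable {R : Type u} [CommRing R] {M : Type u} [AddCommGroup M] [Module R M]

open scoped Pointwise

private lemma smul_mem_next (I : Ideal R) {t : R} (ht : t ∈ I) {k : ℕ} {x : M}
    (hx : x ∈ I ^ k • (⊤ : Submodule R M)) : t • x ∈ I ^ (k + 1) • (⊤ : Submodule R M) := by
  rw [pow_succ', mul_smul]
  exact Submodule.smul_mem_smul ht hx

/-- Multiplication by `t` as a map between consecutive graded pieces. -/
private noncomputable def grStep (I : Ideal R) {t : R} (ht : t ∈ I) (n : ℕ) :
    (↥(I ^ n • (⊤ : Submodule R M)) ⧸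
        (Submodule.comap (I ^ n • (⊤ : Submodule R M)).subtype
          (I ^ (n + 1) • (⊤ : Submodule R M)))) →ₗ[R]
    (↥(I ^ (n + 1) • (⊤ : Submodule R M)) ⧸
        (Submodule.comap (I ^ (n + 1) • (⊤ : Submodule R M)).subtype
          (I ^ (n + 2) • (⊤ : Submodule R M)))) :=
  Submodule.liftQ _
    ((Submodule.mkQ _).comp
      (LinearMap.codRestrict _ (t • (I ^ n • (⊤ : Submodule R M)).subtype)
        (fun c => smul_mem_next I ht c.2)))
    (by
      intro c hc
      simp only [LinearMap.mem_ker, LinearMap.comp_apply, Submodule.mkQ_apply,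
        Submodule.Quotient.mk_eq_zero, Submodule.mem_comap]
      exact smul_mem_next I ht hc)

private lemma grStep_surjective (I : Ideal R) {t : R} (ht : t ∈ I)
    (hspan : I ≤ Ideal.span {t} ⊔ I ^ 2) (n : ℕ) :
    Function.Surjective (grStep (M := M) I ht n) := by
  intro z
  obtain ⟨⟨y, hy⟩, rfl⟩ := Submodule.Quotient.mk_surjective _ z
  have key : y ∈ (t • (I ^ n • (⊤ : Submodule R M))) ⊔ (I ^ (n + 2) • ⊤) := by
    have h1 : I ^ (n + 1) • (⊤ : Submodule R M)
        ≤ ((Ideal.span {t} * I ^ n) ⊔ I ^ (n + 2)) • ⊤ := by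
      apply Submodule.smul_mono_left
      calc I ^ (n + 1) = I * I ^ n := by rw [pow_succ']
        _ ≤ (Ideal.span {t} ⊔ I ^ 2) * I ^ n := Ideal.mul_mono_left hspan
        _ = Ideal.span {t} * I ^ n ⊔ I ^ 2 * I ^ n := Ideal.sup_mul _ _ _
        _ = Ideal.span {t} * I ^ n ⊔ I ^ (n + 2) := by rw [← pow_add]; ring_nf
    have h2 : ((Ideal.span {t} * I ^ n) ⊔ I ^ (n + 2)) • (⊤ : Submodule R M)
        = (t • (I ^ n • (⊤ : Submodule R M))) ⊔ (I ^ (n + 2) • ⊤) := by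
      rw [Submodule.sup_smul, mul_smul, Submodule.ideal_span_singleton_smul]
    exact h2 ▸ h1 hy
  obtain ⟨u, hu, v, hv, huv⟩ := Submodule.mem_sup.mp key
  obtain ⟨w, hw, rfl⟩ := Set.mem_smul_set.mp hu
  refine ⟨Submodule.Quotient.mk ⟨w, hw⟩, ?_⟩
  rw [grStep, Submodule.liftQ_apply]
  simp only [LinearMap.comp_apply, Submodule.mkQ_apply]
  rw [Submodule.Quotient.eq]
  rw [Submodule.mem_comap]
  show t • w - y ∈ I ^ (n + 2) • (⊤ : Submodule R M)
  have hyeq : t • w - y = -v := by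
    rw [← huv]; abel
  rw [hyeq]
  exact neg_mem hv

set_option maxHeartbeats 2000000 in
/-- The composite of the step maps, starting from grade `0`. -/
private noncomputable def grChain (I : Ideal R) {t : R} (ht : t ∈ I) : (n : ℕ) →
    (↥(I ^ 0 • (⊤ : Submodule R M)) ⧸
        (Submodule.comap (I ^ 0 • (⊤ : Submodule R M)).subtype
          (I ^ (0 + 1) • (⊤ : Submodule R M)))) →ₗ[R]
    (↥(I ^ n • (⊤ : Submodule R M)) ⧸
        (Submodule.comap (I ^ n • (⊤ : Submodule R M)).subtype
          (I ^ (n + 1) • (⊤ : Submodule R M))))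
  | 0 => LinearMap.id
  | (n + 1) => (grStep I ht n).comp (grChain I ht n)

private lemma grChain_surjective (I : Ideal R) {t : R} (ht : t ∈ I)
    (hspan : I ≤ Ideal.span {t} ⊔ I ^ 2) (n : ℕ) :
    Function.Surjective (grChain (M := M) I ht n) := by
  induction n with
  | zero =>
    rw [grChain]
    exact Function.surjective_id
  | succ n ih =>
    rw [grChain, LinearMap.coe_comp]
    exact (grStep_surjective I ht hspan n).comp ih

end machinery

/-- Let `R` be a Dedekind domain, `I` an ideal of `R` and `M` a
finitely generated `R`-module.  Then the modules `IⁿM/Iⁿ⁺¹M` are all isomorphic for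
large `n`.  In particular, for any covariant `R`-linear functor `F` from `R`-modules to
`R`-modules, the sets `Ass_R F(IⁿM/Iⁿ⁺¹M)` stabilize. -/
theorem dedekind_graded_pieces_eventually_isomorphic
    {R : Type u} [CommRing R] [IsDomain R] [IsDedekindDomain R] (I : Ideal R)
    (M : Type u) [AddCommGroup M] [Module R M] [Module.Finite R M] :
    (∃ N₀ : ℕ, ∀ n : ℕ, N₀ ≤ n →
      Nonempty
        ((↥(I ^ n • (⊤ : Submodule R M)) ⧸
            (Submodule.comap (I ^ n • (⊤ : Submodule R M)).subtype
              (I ^ (n + 1) • (⊤ : Submodule R M)))) ≃ₗ[R]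
         (↥(I ^ N₀ • (⊤ : Submodule R M)) ⧸
            (Submodule.comap (I ^ N₀ • (⊤ : Submodule R M)).subtype
              (I ^ (N₀ + 1) • (⊤ : Submodule R M)))))) ∧
    (∀ (F : ModuleCat.{u} R ⥤ ModuleCat.{u} R) [F.Additive] [F.Linear R],
      ∃ N₀ : ℕ, ∀ n : ℕ, N₀ ≤ n →
        associatedPrimes R (F.obj (ModuleCat.of R
          (↥(I ^ n • (⊤ : Submodule R M)) ⧸
            (Submodule.comap (I ^ n • (⊤ : Submodule R M)).subtype
              (I ^ (n + 1) • (⊤ : Submodule R M)))))) =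
        associatedPrimes R (F.obj (ModuleCat.of R
          (↥(I ^ N₀ • (⊤ : Submodule R M)) ⧸
            (Submodule.comap (I ^ N₀ • (⊤ : Submodule R M)).subtype
              (I ^ (N₀ + 1) • (⊤ : Submodule R M))))))) := by
  obtain ⟨t, ht, hspan⟩ := exists_span_sup_sq I
  have key : ∃ N₀ : ℕ, ∀ n : ℕ, N₀ ≤ n →
      Nonempty
        ((↥(I ^ n • (⊤ : Submodule R M)) ⧸
            (Submodule.comap (I ^ n • (⊤ : Submodule R M)).subtype
              (I ^ (n + 1) • (⊤ : Submodule R M)))) ≃ₗ[R]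
         (↥(I ^ N₀ • (⊤ : Submodule R M)) ⧸
            (Submodule.comap (I ^ N₀ • (⊤ : Submodule R M)).subtype
              (I ^ (N₀ + 1) • (⊤ : Submodule R M))))) := by
    haveI : IsNoetherian R M := isNoetherian_of_isNoetherianRing_of_finite R M
    have hsucc : ∀ n, grChain (M := M) I ht (n + 1)
        = (grStep I ht n).comp (grChain (M := M) I ht n) := fun n => by rw [grChain]
    have hmono : Monotone fun n => LinearMap.ker (grChain (M := M) I ht n) :=
      monotone_nat_of_le_succ fun n => by
        rw [hsucc n]
        exact LinearMap.ker_le_ker_comp (grChain (M := M) I ht n) (grStep I ht n)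
    obtain ⟨N₀, hstab⟩ := monotone_stabilizes_iff_noetherian.mpr inferInstance
      ⟨fun n => LinearMap.ker (grChain (M := M) I ht n), hmono⟩
    refine ⟨N₀, fun n hn => ⟨?_⟩⟩
    exact ((grChain (M := M) I ht n).quotKerEquivOfSurjective
        (grChain_surjective I ht hspan n)).symm ≪≫ₗ
      (Submodule.quotEquivOfEq _ _ (hstab n hn).symm) ≪≫ₗ
      ((grChain (M := M) I ht N₀).quotKerEquivOfSurjective
        (grChain_surjective I ht hspan N₀))
  refine ⟨key, ?_⟩
  intro F _ _
  obtain ⟨N₀, h⟩ := key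
  refine ⟨N₀, fun n hn => ?_⟩
  have e := (h n hn).some
  exact LinearEquiv.AssociatedPrimes.eq ((F.mapIso e.toModuleIso).toLinearEquiv)
end
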